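/- Let ν : [0,∞) → [0,∞) be continuous and non-decreasing, let η : [0,∞) → [0,∞) be continuous, and let N ∈ ℕ be such that |ν(t_1) − ν(t_2)| ≤ η(t_2)(1 + |t_1 − t_2|)^N for all t_1, t_2 ≥ 0. Extend ν radially to ℝ^d by ν(x) = ν(|x|) and define ν̃(z) = π^{−d/2} ∫_{ℝ^d} ν(x) e^{−(z−x)·(z−x)} dx for z ∈ ℂ^d. Then ν̃ is an entire function on ℂ^d and, with A = π^{−d/2} ∫_{ℝ^d} (1+|x|)^N e^{−|x|²} dx, one has |ν̃(z) − ν(Re z)| ≤ A e^{|Im z|²} η(|Re z|) for all z ∈ ℂ^d. -/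

import Mathlib

open Filter MeasureTheory
open scoped BigOperators

set_option synthInstance.maxHeartbeats 1000000
set_option maxHeartbeats 1000000
set_option linter.unusedVariables false

noncomputable section

abbrev Rd (d : ℕ) := EuclideanSpace ℝ (Fin d)

abbrev Cd (d : ℕ) := EuclideanSpace ℂ (Fin d)

/-- Embedding of `ℝ^d` into `ℂ^d`. -/
def toCd {d : ℕ} (x : Rd d) : Cd d := WithLp.toLp 2 (fun j => (x j : ℂ))

/-- Real part of a point of `ℂ^d`. -/
def reP {d : ℕ} (z : Cd d) : Rd d := WithLp.toLp 2 (fun j => (z j).re)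

/-- Imaginary part of a point of `ℂ^d`. -/
def imP {d : ℕ} (z : Cd d) : Rd d := WithLp.toLp 2 (fun j => (z j).im)

def Qf {d : ℕ} (z : Cd d) (x : Rd d) : ℂ := ∑ j, ((z j) - ((x j : ℝ) : ℂ))^2

lemma norm_sq_Rd {d : ℕ} (y : Rd d) : ‖y‖^2 = ∑ j, (y j)^2 := by
  rw [EuclideanSpace.norm_eq, Real.sq_sqrt]
  · simp [sq_abs]
  · positivity

lemma re_Qf {d : ℕ} (z : Cd d) (x : Rd d) :
    (Qf z x).re = ‖reP z - x‖^2 - ‖imP z‖^2 := by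
  rw [norm_sq_Rd, norm_sq_Rd, ← Finset.sum_sub_distrib]
  unfold Qf
  rw [Complex.re_sum]
  refine Finset.sum_congr rfl fun j _ => ?_
  simp [reP, imP, Complex.sq_norm, pow_two, Complex.mul_re]

lemma abs_cexp_negQ {d : ℕ} (z : Cd d) (x : Rd d) :
    ‖Complex.exp (-Qf z x)‖ = Real.exp (‖imP z‖^2 - ‖reP z - x‖^2) := by
  rw [Complex.norm_exp]
  congr 1
  rw [Complex.neg_re, re_Qf]
  ring

lemma int1 (c : ℂ) : ∫ t : ℝ, Complex.exp (-(c - t)^2) = ((Real.pi ^ ((1:ℝ)/2) : ℝ) : ℂ) := by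
  have h : ∀ t : ℝ, -(c - (t:ℂ))^2 = (-1) * (t:ℂ)^2 + (2*c) * t + (-(c^2)) := by
    intro t; ring
  simp_rw [h]
  rw [integral_cexp_quadratic (by norm_num) (2*c) (-(c^2))]
  have : (-(c^2) - (2*c)^2 / (4 * (-1 : ℂ))) = 0 := by ring
  rw [this, Complex.exp_zero, mul_one, neg_neg]
  rw [div_one, Complex.ofReal_cpow Real.pi_pos.le]
  norm_num

lemma integral_cexp_negQ {d : ℕ} (z : Cd d) :
    ∫ x : Rd d, Complex.exp (-Qf z x) = ((Real.pi ^ ((d:ℝ)/2) : ℝ) : ℂ) := by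
  have hmp := (EuclideanSpace.volume_preserving_symm_measurableEquiv_toLp (Fin d)).symm
  rw [← hmp.integral_comp (MeasurableEquiv.measurableEmbedding _)]
  have h1 : (fun v : Fin d → ℝ =>
      Complex.exp (-Qf z ((MeasurableEquiv.toLp 2 (Fin d → ℝ)).symm.symm v)))
      = fun v => ∏ j, Complex.exp (-(z j - (v j : ℂ))^2) := by
    funext v
    rw [← Complex.exp_sum]
    congr 1
    unfold Qf
    rw [← Finset.sum_neg_distrib]
    rfl
  rw [h1, MeasureTheory.volume_pi, integral_fintype_prod_eq_prod (f := fun j (t : ℝ) => Complex.exp (-(z j - t)^2))]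
  simp_rw [int1]
  rw [Finset.prod_const, Finset.card_univ, Fintype.card_fin, ← Complex.ofReal_pow,
    ← Real.rpow_natCast (Real.pi ^ ((1:ℝ)/2)), ← Real.rpow_mul Real.pi_pos.le,
    show (1:ℝ)/2 * d = (d:ℝ)/2 by ring]

lemma integrable_gauss {d : ℕ} {b : ℝ} (hb : 0 < b) :
    Integrable (fun x : Rd d => Real.exp (-b * ‖x‖^2)) := by
  have h := (GaussianFourier.integrable_cexp_neg_mul_sq_norm_add (V := Rd d)
    (b := (b:ℂ)) (by simpa) 0 0).norm
  refine h.congr (Filter.Eventually.of_forall fun x => ?_)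
  simp [Complex.norm_exp]
  left
  rw [← Complex.ofReal_pow, Complex.ofReal_re]

lemma poly_gauss_le {k : ℕ} {b : ℝ} (hb : 0 < b) (t : ℝ) (ht : 0 ≤ t) :
    (1 + t)^k * Real.exp (-b * t^2) ≤
      Real.exp ((k:ℝ)^2/(2*b)) * Real.exp (-(b/2) * t^2) := by
  have h1 : (1 + t)^k ≤ Real.exp ((k:ℝ) * t) := by
    calc (1+t)^k ≤ (Real.exp t)^k :=
          pow_le_pow_left₀ (by linarith) (by linarith [Real.add_one_le_exp t]) k
    _ = Real.exp ((k:ℝ)*t) := by rw [← Real.exp_nat_mul]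
  calc (1 + t)^k * Real.exp (-b * t^2) ≤ Real.exp ((k:ℝ)*t) * Real.exp (-b*t^2) :=
        mul_le_mul_of_nonneg_right h1 (Real.exp_nonneg _)
  _ = Real.exp ((k:ℝ)*t - b*t^2) := by rw [← Real.exp_add]; ring_nf
  _ ≤ _ := by
        rw [← Real.exp_add, Real.exp_le_exp]
        have h3 : 0 < 2*b := by linarith
        have key : (k:ℝ)*t - (b/2)*t^2 ≤ (k:ℝ)^2/(2*b) := by
          rw [le_div_iff₀ h3]
          nlinarith [sq_nonneg ((k:ℝ) - b*t)]
        linarith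

lemma integrable_poly_gauss {d : ℕ} (k : ℕ) {b : ℝ} (hb : 0 < b) :
    Integrable (fun x : Rd d => (1 + ‖x‖)^k * Real.exp (-b * ‖x‖^2)) := by
  refine Integrable.mono' ((integrable_gauss (d := d) (half_pos hb)).const_mul
    (Real.exp ((k:ℝ)^2/(2*b)))) ?_ ?_
  · exact (((continuous_const.add continuous_norm).pow k).mul
      (((continuous_const.mul (continuous_norm.pow 2))).rexp)).aestronglyMeasurable
  · filter_upwards with x
    rw [Real.norm_eq_abs, _root_.abs_of_nonneg (by positivity)]
    exact poly_gauss_le (k := k) hb ‖x‖ (norm_nonneg x)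

lemma norm_sub_sq_lower {d : ℕ} (x a : Rd d) : ‖x‖^2/2 - ‖a‖^2 ≤ ‖x - a‖^2 := by
  have h : ‖x‖ - ‖a‖ ≤ ‖x - a‖ := norm_sub_norm_le x a
  nlinarith [norm_nonneg a, norm_nonneg (x - a), norm_nonneg x, sq_nonneg (‖x - a‖ - ‖a‖)]

lemma cont_nu {ν : ℝ → ℝ} (hνc : ContinuousOn ν (Set.Ici 0)) {d : ℕ} :
    Continuous fun x : Rd d => ν ‖x‖ :=
  hνc.comp_continuous continuous_norm fun x => Set.mem_Ici.mpr (norm_nonneg x)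

lemma contQ {d : ℕ} (z : Cd d) : Continuous fun x : Rd d => Complex.exp (-Qf z x) := by
  refine Complex.continuous_exp.comp (Continuous.neg ?_)
  unfold Qf
  refine continuous_finset_sum _ fun j _ => ?_
  exact (continuous_const.sub (Complex.continuous_ofReal.comp (PiLp.continuous_apply 2 (fun _ : Fin d => ℝ) j))).pow 2

lemma coord_le_norm {𝕜 : Type*} [RCLike 𝕜] {d : ℕ} (w : EuclideanSpace 𝕜 (Fin d)) (j : Fin d) :
    ‖w j‖ ≤ ‖w‖ := by
  rw [EuclideanSpace.norm_eq]
  rw [show ‖w j‖ = Real.sqrt (‖w j‖^2) from (Real.sqrt_sq (norm_nonneg _)).symm]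
  exact Real.sqrt_le_sqrt (Finset.single_le_sum (f := fun i => ‖w i‖^2)
    (fun i _ => sq_nonneg _) (Finset.mem_univ j))

lemma norm_proj_le {d : ℕ} (j : Fin d) : ‖(EuclideanSpace.proj j : Cd d →L[ℂ] ℂ)‖ ≤ 1 :=
  ContinuousLinearMap.opNorm_le_bound _ zero_le_one fun w => by
    rw [one_mul]; exact coord_le_norm w j

def Lmap {d : ℕ} (z : Cd d) (x : Rd d) : Cd d →L[ℂ] ℂ :=
  ∑ j, (2 * (z j - ((x j : ℝ) : ℂ))) • (EuclideanSpace.proj j : Cd d →L[ℂ] ℂ)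

lemma norm_Lmap_le {d : ℕ} (z : Cd d) (x : Rd d) :
    ‖Lmap z x‖ ≤ 2 * d * (‖z‖ + ‖x‖) := by
  refine (norm_sum_le _ _).trans ?_
  have h : ∀ j : Fin d, ‖(2 * (z j - ((x j : ℝ) : ℂ))) • (EuclideanSpace.proj j : Cd d →L[ℂ] ℂ)‖
      ≤ 2 * (‖z‖ + ‖x‖) := by
    intro j
    refine (norm_smul_le (2 * (z j - ((x j : ℝ) : ℂ))) (EuclideanSpace.proj j : Cd d →L[ℂ] ℂ)).trans ?_
    calc ‖2 * (z j - ((x j : ℝ) : ℂ))‖ * ‖(EuclideanSpace.proj j : Cd d →L[ℂ] ℂ)‖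
        ≤ ‖2 * (z j - ((x j : ℝ) : ℂ))‖ * 1 :=
          mul_le_mul_of_nonneg_left (norm_proj_le j) (norm_nonneg _)
    _ = 2 * ‖z j - ((x j : ℝ) : ℂ)‖ := by
          rw [mul_one, norm_mul]; norm_num
    _ ≤ 2 * (‖z‖ + ‖x‖) := by
          have h1 : ‖z j - ((x j : ℝ) : ℂ)‖ ≤ ‖z j‖ + ‖(x j : ℂ)‖ := norm_sub_le _ _
          have h2 : ‖z j‖ ≤ ‖z‖ := coord_le_norm z j
          have h3 : ‖((x j : ℝ) : ℂ)‖ ≤ ‖x‖ := by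
            rw [Complex.norm_real]
            exact coord_le_norm (𝕜 := ℝ) x j
          linarith
  refine (Finset.sum_le_sum fun j _ => h j).trans ?_
  rw [Finset.sum_const, Finset.card_univ, Fintype.card_fin, nsmul_eq_mul]
  ring_nf
  exact le_refl _

lemma hasFDerivAt_Q {d : ℕ} (z : Cd d) (x : Rd d) :
    HasFDerivAt (fun w : Cd d => Qf w x) (Lmap z x) z := by
  unfold Qf Lmap
  refine HasFDerivAt.fun_sum fun j _ => ?_
  have h1 : HasFDerivAt (fun w : Cd d => w j)
      (EuclideanSpace.proj j : Cd d →L[ℂ] ℂ) z :=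
    (EuclideanSpace.proj j : Cd d →L[ℂ] ℂ).hasFDerivAt
  have h2 : HasDerivAt (fun u : ℂ => (u - ((x j : ℝ) : ℂ))^2)
      (2 * (z j - ((x j : ℝ) : ℂ))) (z j) := by
    simpa using ((hasDerivAt_id (z j)).sub_const ((x j : ℝ) : ℂ)).fun_pow 2
  exact h2.comp_hasFDerivAt z h1

lemma hasFDerivAt_F {d : ℕ} (ν : ℝ → ℝ) (z : Cd d) (x : Rd d) :
    HasFDerivAt (fun w : Cd d => (ν ‖x‖ : ℂ) * Complex.exp (-Qf w x))
      (((ν ‖x‖ : ℂ) * Complex.exp (-Qf z x)) • -(Lmap z x)) z := by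
  have h : HasFDerivAt (fun w : Cd d => Complex.exp (-Qf w x))
      (Complex.exp (-Qf z x) • -(Lmap z x)) z := ((hasFDerivAt_Q z x).neg).cexp
  have h2 := h.const_mul ((ν ‖x‖ : ℝ) : ℂ)
  rw [smul_smul] at h2
  exact h2

lemma norm_F_eq {d : ℕ} (ν : ℝ → ℝ) (z : Cd d) (x : Rd d) :
    ‖(ν ‖x‖ : ℂ) * Complex.exp (-Qf z x)‖
      = |ν ‖x‖| * Real.exp (‖imP z‖^2 - ‖reP z - x‖^2) := by
  rw [norm_mul, Complex.norm_real, Real.norm_eq_abs, abs_cexp_negQ]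

lemma F_bound {d : ℕ} {ν : ℝ → ℝ} {c0 c1 : ℝ} {N : ℕ}
    (hpos : ∀ t : ℝ, 0 ≤ t → 0 ≤ ν t)
    (hgrow : ∀ t : ℝ, 0 ≤ t → ν t ≤ c0 + c1 * (1+t)^N)
    (h0 : 0 ≤ c0) (h1 : 0 ≤ c1) (z : Cd d) (x : Rd d) :
    ‖(ν ‖x‖ : ℂ) * Complex.exp (-Qf z x)‖ ≤
      ((c0 + c1) * Real.exp (‖imP z‖^2 + ‖reP z‖^2)) *
        ((1+‖x‖)^N * Real.exp (-(1/2) * ‖x‖^2)) := by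
  rw [norm_F_eq, _root_.abs_of_nonneg (hpos _ (norm_nonneg _))]
  have e1 : Real.exp (‖imP z‖^2 - ‖reP z - x‖^2) ≤
      Real.exp (‖imP z‖^2 + ‖reP z‖^2) * Real.exp (-(1/2) * ‖x‖^2) := by
    rw [← Real.exp_add, Real.exp_le_exp]
    have h := norm_sub_sq_lower x (reP z)
    rw [norm_sub_rev] at h
    linarith
  have e2 : ν ‖x‖ ≤ (c0 + c1) * (1+‖x‖)^N := by
    have hg := hgrow ‖x‖ (norm_nonneg _)
    have hp : (1:ℝ) ≤ (1+‖x‖)^N := one_le_pow₀ (by linarith [norm_nonneg x])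
    nlinarith
  calc ν ‖x‖ * Real.exp (‖imP z‖^2 - ‖reP z - x‖^2)
      ≤ ((c0 + c1) * (1+‖x‖)^N) *
        (Real.exp (‖imP z‖^2 + ‖reP z‖^2) * Real.exp (-(1/2) * ‖x‖^2)) := by
        exact mul_le_mul e2 e1 (Real.exp_nonneg _) (by positivity)
  _ = _ := by ring

lemma integrable_F {d : ℕ} {ν : ℝ → ℝ} {c0 c1 : ℝ} {N : ℕ}
    (hc : Continuous fun x : Rd d => ν ‖x‖)
    (hpos : ∀ t : ℝ, 0 ≤ t → 0 ≤ ν t)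
    (hgrow : ∀ t : ℝ, 0 ≤ t → ν t ≤ c0 + c1 * (1+t)^N)
    (h0 : 0 ≤ c0) (h1 : 0 ≤ c1) (z : Cd d) :
    Integrable (fun x : Rd d => (ν ‖x‖ : ℂ) * Complex.exp (-Qf z x)) := by
  refine Integrable.mono' ((integrable_poly_gauss (d := d) N (by norm_num : (0:ℝ) < 1/2)).const_mul
    ((c0 + c1) * Real.exp (‖imP z‖^2 + ‖reP z‖^2))) ?_ ?_
  · exact ((Complex.continuous_ofReal.comp hc).mul (contQ z)).aestronglyMeasurable
  · filter_upwards with x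
    exact (F_bound hpos hgrow h0 h1 z x).trans (le_of_eq (by ring))

lemma norm_reP_le {d : ℕ} (z : Cd d) : ‖reP z‖ ≤ ‖z‖ := by
  rw [EuclideanSpace.norm_eq, EuclideanSpace.norm_eq]
  refine Real.sqrt_le_sqrt (Finset.sum_le_sum fun j _ => ?_)
  have h : ‖reP z j‖ ≤ ‖z j‖ := by
    simpa [reP, Real.norm_eq_abs] using Complex.abs_re_le_norm (z j)
  exact pow_le_pow_left₀ (norm_nonneg _) h 2

lemma norm_imP_le {d : ℕ} (z : Cd d) : ‖imP z‖ ≤ ‖z‖ := by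
  rw [EuclideanSpace.norm_eq, EuclideanSpace.norm_eq]
  refine Real.sqrt_le_sqrt (Finset.sum_le_sum fun j _ => ?_)
  have h : ‖imP z j‖ ≤ ‖z j‖ := by
    simpa [imP, Real.norm_eq_abs] using Complex.abs_im_le_norm (z j)
  exact pow_le_pow_left₀ (norm_nonneg _) h 2

lemma integrable_poly_gauss1 {d : ℕ} (k : ℕ) :
    Integrable (fun x : Rd d => (1 + ‖x‖)^k * Real.exp (-‖x‖^2)) := by
  have h := integrable_poly_gauss (d := d) k one_pos
  simpa only [neg_one_mul, one_mul] using h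

lemma integrable_poly_gauss_shift {d : ℕ} (k : ℕ) (a : Rd d) :
    Integrable (fun x : Rd d => (1 + ‖x - a‖)^k * Real.exp (-‖x - a‖^2)) :=
  (integrable_poly_gauss1 (d := d) k).comp_sub_right a

lemma integral_poly_gauss_shift {d : ℕ} (k : ℕ) (a : Rd d) :
    ∫ x : Rd d, (1 + ‖x - a‖)^k * Real.exp (-‖x - a‖^2)
      = ∫ x : Rd d, (1 + ‖x‖)^k * Real.exp (-‖x‖^2) :=
  integral_sub_right_eq_self (fun y : Rd d => (1 + ‖y‖)^k * Real.exp (-‖y‖^2)) a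

lemma diff_integral {d : ℕ} {ν : ℝ → ℝ} {c0 c1 : ℝ} {N : ℕ}
    (hc : Continuous fun x : Rd d => ν ‖x‖)
    (hpos : ∀ t : ℝ, 0 ≤ t → 0 ≤ ν t)
    (hgrow : ∀ t : ℝ, 0 ≤ t → ν t ≤ c0 + c1 * (1+t)^N)
    (h0 : 0 ≤ c0) (h1 : 0 ≤ c1) :
    Differentiable ℂ (fun z : Cd d =>
      ∫ x : Rd d, (ν ‖x‖ : ℂ) * Complex.exp (-Qf z x)) := by
  intro z₀
  set R : ℝ := ‖z₀‖ + 1 with hRdef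
  have hR1 : 1 ≤ R := by rw [hRdef]; linarith [norm_nonneg z₀]
  set K : ℝ := ((c0 + c1) * Real.exp (2*R^2)) * (2*d*R) with hKdef
  have hb_int : Integrable (fun x : Rd d =>
      K * ((1+‖x‖)^(N+1) * Real.exp (-(1/2)*‖x‖^2))) :=
    (integrable_poly_gauss (d := d) (N+1) (by norm_num : (0:ℝ) < 1/2)).const_mul K
  refine (hasFDerivAt_integral_of_dominated_of_fderiv_le
    (F := fun (z : Cd d) (x : Rd d) => (ν ‖x‖ : ℂ) * Complex.exp (-Qf z x))
    (F' := fun (z : Cd d) (x : Rd d) =>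
      ((ν ‖x‖ : ℂ) * Complex.exp (-Qf z x)) • -(Lmap z x))
    (x₀ := z₀) (bound := fun x => K * ((1+‖x‖)^(N+1) * Real.exp (-(1/2)*‖x‖^2)))
    (Metric.ball_mem_nhds z₀ one_pos) ?_ ?_ ?_ ?_ hb_int ?_).differentiableAt
  · exact Filter.Eventually.of_forall fun z =>
      ((Complex.continuous_ofReal.comp hc).mul (contQ z)).aestronglyMeasurable
  · exact integrable_F hc hpos hgrow h0 h1 z₀
  · refine Continuous.aestronglyMeasurable ?_
    refine Continuous.smul ((Complex.continuous_ofReal.comp hc).mul (contQ z₀)) ?_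
    refine Continuous.neg ?_
    unfold Lmap
    refine continuous_finset_sum _ fun j _ => ?_
    exact Continuous.smul (continuous_const.mul
      (continuous_const.sub (Complex.continuous_ofReal.comp (PiLp.continuous_apply 2 (fun _ : Fin d => ℝ) j))))
      continuous_const
  · filter_upwards with x
    intro z hz
    have hzR : ‖z‖ ≤ R := by
      have h1' : ‖z - z₀‖ < 1 := by
        rw [← dist_eq_norm]; exact Metric.mem_ball.mp hz
      calc ‖z‖ = ‖z₀ + (z - z₀)‖ := by rw [show z₀ + (z - z₀) = z by abel]
      _ ≤ ‖z₀‖ + ‖z - z₀‖ := norm_add_le _ _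
      _ ≤ R := by rw [hRdef]; linarith
    have bound1 : ‖(ν ‖x‖ : ℂ) * Complex.exp (-Qf z x)‖ ≤
        ((c0 + c1) * Real.exp (2*R^2)) * ((1+‖x‖)^N * Real.exp (-(1/2) * ‖x‖^2)) := by
      refine (F_bound hpos hgrow h0 h1 z x).trans ?_
      have him : ‖imP z‖ ≤ R := (norm_imP_le z).trans hzR
      have hre : ‖reP z‖ ≤ R := (norm_reP_le z).trans hzR
      have h2 : ‖imP z‖^2 + ‖reP z‖^2 ≤ 2*R^2 := by
        have := pow_le_pow_left₀ (norm_nonneg (imP z)) him 2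
        have := pow_le_pow_left₀ (norm_nonneg (reP z)) hre 2
        linarith
      have hee := Real.exp_le_exp.mpr h2
      have hx : (0:ℝ) ≤ (1+‖x‖)^N * Real.exp (-(1/2) * ‖x‖^2) := by positivity
      exact mul_le_mul_of_nonneg_right
        (mul_le_mul_of_nonneg_left hee (add_nonneg h0 h1)) hx
    have bound2 : ‖Lmap z x‖ ≤ 2*d*R*(1+‖x‖) := by
      refine (norm_Lmap_le z x).trans ?_
      have hd : (0:ℝ) ≤ (d:ℝ) := Nat.cast_nonneg d
      have hx : (0:ℝ) ≤ ‖x‖ := norm_nonneg x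
      nlinarith [le_mul_of_one_le_left hx hR1, mul_nonneg hd (by linarith [le_mul_of_one_le_left hx hR1] : (0:ℝ) ≤ R + R*‖x‖ - ‖z‖ - ‖x‖)]
    calc ‖((ν ‖x‖ : ℂ) * Complex.exp (-Qf z x)) • -(Lmap z x)‖
        ≤ ‖(ν ‖x‖ : ℂ) * Complex.exp (-Qf z x)‖ * ‖Lmap z x‖ := by
          refine (norm_smul_le ((ν ‖x‖ : ℂ) * Complex.exp (-Qf z x)) (-(Lmap z x))).trans ?_
          rw [norm_neg]
    _ ≤ (((c0 + c1) * Real.exp (2*R^2)) * ((1+‖x‖)^N * Real.exp (-(1/2) * ‖x‖^2))) *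
          (2*d*R*(1+‖x‖)) := by
          refine mul_le_mul bound1 bound2 (norm_nonneg _) ?_
          positivity
    _ = K * ((1+‖x‖)^(N+1) * Real.exp (-(1/2)*‖x‖^2)) := by
          rw [hKdef]; ring
  · filter_upwards with x
    intro z hz
    exact hasFDerivAt_F ν z x

/-- Gaussian regularization `ν̃(z) = π^{-d/2} ∫_{ℝ^d} ν(|x|) e^{-(z-x)·(z-x)} dx`. -/
def nuTilde {d : ℕ} (ν : ℝ → ℝ) (z : Cd d) : ℂ :=
  ((Real.pi ^ (-(d : ℝ)/2) : ℝ) : ℂ) *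
    ∫ x : Rd d, (ν ‖x‖ : ℂ) * Complex.exp (- ∑ j, ((z j) - ((x j : ℝ) : ℂ))^2)

/-- The Gaussian regularization of a radially extended weight is entire and stays close
to `ν(Re z)` (part of the proof of Proposition 6.2). -/
theorem stmt4 {d : ℕ} (ν η : ℝ → ℝ) (N : ℕ)
    (hνc : ContinuousOn ν (Set.Ici 0)) (hνmono : MonotoneOn ν (Set.Ici 0))
    (hνpos : ∀ t : ℝ, 0 ≤ t → 0 ≤ ν t)
    (hηc : ContinuousOn η (Set.Ici 0)) (hηpos : ∀ t : ℝ, 0 ≤ t → 0 ≤ η t)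
    (hest : ∀ t₁ t₂ : ℝ, 0 ≤ t₁ → 0 ≤ t₂ →
      |ν t₁ - ν t₂| ≤ η t₂ * (1 + |t₁ - t₂|) ^ N) :
    Differentiable ℂ (nuTilde (d := d) ν) ∧
    ∀ z : Cd d,
      ‖nuTilde ν z - (ν ‖reP z‖ : ℝ)‖ ≤
        (Real.pi ^ (-(d : ℝ)/2) * ∫ x : Rd d, (1 + ‖x‖) ^ N * Real.exp (-‖x‖^2)) *
          Real.exp (‖imP z‖^2) * η ‖reP z‖ := by
  have hcν : Continuous fun x : Rd d => ν ‖x‖ := cont_nu hνc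
  have hν0 : 0 ≤ ν 0 := hνpos 0 le_rfl
  have hη0 : 0 ≤ η 0 := hηpos 0 le_rfl
  have hgrow : ∀ t : ℝ, 0 ≤ t → ν t ≤ ν 0 + η 0 * (1+t)^N := by
    intro t ht
    have h := hest t 0 ht le_rfl
    rw [sub_zero, _root_.abs_of_nonneg ht] at h
    have h2 := (le_abs_self (ν t - ν 0)).trans h
    linarith
  have hnut : nuTilde (d := d) ν = fun z : Cd d =>
      ((Real.pi ^ (-(d:ℝ)/2) : ℝ) : ℂ) *
        ∫ x : Rd d, (ν ‖x‖ : ℂ) * Complex.exp (-Qf z x) := rfl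
  constructor
  · rw [hnut]
    exact fun z => ((diff_integral hcν hνpos hgrow hν0 hη0) z).const_mul _
  · intro z
    set a : Rd d := reP z with hadef
    set C : ℝ := Real.pi ^ (-(d:ℝ)/2) with hCdef
    have hCpos : 0 < C := Real.rpow_pos_of_pos Real.pi_pos _
    have hν_a : 0 ≤ ν ‖a‖ := hνpos _ (norm_nonneg _)
    have hη_a : 0 ≤ η ‖a‖ := hηpos _ (norm_nonneg _)
    have hInt1 : Integrable (fun x : Rd d => (ν ‖x‖ : ℂ) * Complex.exp (-Qf z x)) :=
      integrable_F hcν hνpos hgrow hν0 hη0 z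
    have hInt2 : Integrable (fun x : Rd d => ((ν ‖a‖ : ℝ) : ℂ) * Complex.exp (-Qf z x)) :=
      integrable_F (ν := fun _ => ν ‖a‖) (N := 0) continuous_const (fun t _ => hν_a)
        (c0 := ν ‖a‖) (c1 := 0) (fun t ht => by simp) hν_a le_rfl z
    have hGauss := integral_cexp_negQ z
    have hCmul : ((C : ℝ):ℂ) * ((Real.pi ^ ((d:ℝ)/2) : ℝ) : ℂ) = 1 := by
      rw [← Complex.ofReal_mul, hCdef, ← Real.rpow_add Real.pi_pos,
        show -(d:ℝ)/2 + (d:ℝ)/2 = 0 by ring, Real.rpow_zero, Complex.ofReal_one]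
    have key : nuTilde ν z - ((ν ‖a‖ : ℝ) : ℂ) =
        ((C:ℝ):ℂ) * ∫ x : Rd d, ((ν ‖x‖ : ℂ) - ((ν ‖a‖ : ℝ):ℂ)) * Complex.exp (-Qf z x) := by
      have hsub : ∫ x : Rd d, ((ν ‖x‖ : ℂ) - ((ν ‖a‖ : ℝ):ℂ)) * Complex.exp (-Qf z x)
          = (∫ x : Rd d, (ν ‖x‖ : ℂ) * Complex.exp (-Qf z x))
            - ∫ x : Rd d, ((ν ‖a‖ : ℝ):ℂ) * Complex.exp (-Qf z x) := by
        rw [← integral_sub hInt1 hInt2]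
        congr 1; funext x; ring
      have h2 : ((C:ℝ):ℂ) * ∫ x : Rd d, ((ν ‖a‖:ℝ):ℂ) * Complex.exp (-Qf z x)
          = ((ν ‖a‖ : ℝ) : ℂ) := by
        rw [integral_const_mul, hGauss, mul_left_comm, hCmul, mul_one]
      rw [hsub, mul_sub, h2, hnut]
    rw [key, norm_mul, Complex.norm_real, Real.norm_eq_abs, _root_.abs_of_pos hCpos]
    have hpt : ∀ x : Rd d, ‖((ν ‖x‖ : ℂ) - ((ν ‖a‖:ℝ):ℂ)) * Complex.exp (-Qf z x)‖ ≤
        (η ‖a‖ * Real.exp (‖imP z‖^2)) * ((1+‖x - a‖)^N * Real.exp (-‖x - a‖^2)) := by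
      intro x
      rw [norm_mul, ← Complex.ofReal_sub, Complex.norm_real, Real.norm_eq_abs,
        abs_cexp_negQ, ← hadef, norm_sub_rev a x]
      have h2 : |ν ‖x‖ - ν ‖a‖| ≤ η ‖a‖ * (1+‖x - a‖)^N := by
        refine (hest ‖x‖ ‖a‖ (norm_nonneg _) (norm_nonneg _)).trans ?_
        refine mul_le_mul_of_nonneg_left ?_ hη_a
        refine pow_le_pow_left₀ (by positivity) ?_ N
        linarith [abs_norm_sub_norm_le x a]
      calc |ν ‖x‖ - ν ‖a‖| * Real.exp (‖imP z‖^2 - ‖x - a‖^2)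
          ≤ (η ‖a‖ * (1+‖x - a‖)^N) * Real.exp (‖imP z‖^2 - ‖x - a‖^2) :=
            mul_le_mul_of_nonneg_right h2 (Real.exp_nonneg _)
      _ = (η ‖a‖ * Real.exp (‖imP z‖^2)) * ((1+‖x - a‖)^N * Real.exp (-‖x - a‖^2)) := by
            rw [show ‖imP z‖^2 - ‖x - a‖^2 = ‖imP z‖^2 + -‖x - a‖^2 by ring, Real.exp_add]
            ring
    have hIntnorm : Integrable (fun x : Rd d =>
        ‖((ν ‖x‖ : ℂ) - ((ν ‖a‖:ℝ):ℂ)) * Complex.exp (-Qf z x)‖) :=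
      ((hInt1.sub hInt2).congr (Filter.Eventually.of_forall fun x => by
        simp only [Pi.sub_apply]; ring)).norm
    have hIntRHS : Integrable (fun x : Rd d =>
        (η ‖a‖ * Real.exp (‖imP z‖^2)) * ((1+‖x - a‖)^N * Real.exp (-‖x - a‖^2))) :=
      (integrable_poly_gauss_shift N a).const_mul _
    calc C * ‖∫ x : Rd d, ((ν ‖x‖ : ℂ) - ((ν ‖a‖:ℝ):ℂ)) * Complex.exp (-Qf z x)‖
        = C * ‖∫ x : Rd d, ((ν ‖x‖ : ℂ) - ((ν ‖a‖:ℝ):ℂ)) * Complex.exp (-Qf z x)‖ := by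
          rfl
    _ ≤ C * ∫ x : Rd d, ‖((ν ‖x‖ : ℂ) - ((ν ‖a‖:ℝ):ℂ)) * Complex.exp (-Qf z x)‖ :=
          mul_le_mul_of_nonneg_left (norm_integral_le_integral_norm _) hCpos.le
    _ ≤ C * ∫ x : Rd d,
          (η ‖a‖ * Real.exp (‖imP z‖^2)) * ((1+‖x - a‖)^N * Real.exp (-‖x - a‖^2)) :=
          mul_le_mul_of_nonneg_left
            (integral_mono hIntnorm hIntRHS fun x => hpt x) hCpos.le
    _ = C * ((η ‖a‖ * Real.exp (‖imP z‖^2)) *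
          ∫ x : Rd d, (1+‖x - a‖)^N * Real.exp (-‖x - a‖^2)) := by
          rw [MeasureTheory.integral_const_mul]
    _ = C * ((η ‖a‖ * Real.exp (‖imP z‖^2)) *
          ∫ x : Rd d, (1+‖x‖)^N * Real.exp (-‖x‖^2)) := by
          rw [integral_poly_gauss_shift]
    _ = (C * ∫ x : Rd d, (1+‖x‖)^N * Real.exp (-‖x‖^2)) *
          Real.exp (‖imP z‖^2) * η ‖a‖ := by ring
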